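/- Let n, d, m, h be natural numbers. The number of subsets S of Fin n × Fin d with |S| = m such that exactly h indices i ∈ Fin n satisfy that the cardinality of {j ∈ Fin d : (i,j) ∈ S} is odd, equals C(n,h) times the coefficient of X^m in the polynomial f_-(X,d)^h · f_+(X,d)^{n-h} ∈ ℚ[X], where f_-(X,d) := ((1+X)^d - (1-X)^d)/2 and f_+(X,d) := ((1+X)^d + (1-X)^d)/2. -/

import Mathlib

open Polynomial
open Finset
set_option maxRecDepth 8000

/-- `f₋(X, d) = ((1+X)^d - (1-X)^d)/2` over `ℚ`. -/
noncomputable def fminus (d : ℕ) : Polynomial ℚ :=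
  Polynomial.C (1 / 2 : ℚ) * ((1 + Polynomial.X) ^ d - (1 - Polynomial.X) ^ d)

/-- `f₊(X, d) = ((1+X)^d + (1-X)^d)/2` over `ℚ`. -/
noncomputable def fplus (d : ℕ) : Polynomial ℚ :=
  Polynomial.C (1 / 2 : ℚ) * ((1 + Polynomial.X) ^ d + (1 - Polynomial.X) ^ d)

lemma sum_pow_card (d : ℕ) : ∑ T : Finset (Fin d), (X : ℚ[X]) ^ T.card = (1 + X)^d := by
  have := Finset.prod_add (fun _ : Fin d => (X : ℚ[X])) (fun _ => 1) Finset.univ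
  simp only [Finset.prod_const, Finset.card_univ, Fintype.card_fin, Finset.powerset_univ,
    one_pow, mul_one] at this
  rw [add_comm, ← this]

lemma sum_neg_pow_card (d : ℕ) :
    ∑ T : Finset (Fin d), (-1 : ℚ[X]) ^ T.card * X ^ T.card = (1 - X)^d := by
  have := Finset.prod_add (fun _ : Fin d => -(X : ℚ[X])) (fun _ => 1) Finset.univ
  simp only [Finset.prod_const, Finset.card_univ, Fintype.card_fin, Finset.powerset_univ,
    one_pow, mul_one, neg_add_eq_sub] at this
  rw [this]
  exact Finset.sum_congr rfl fun T _ => (neg_pow (X : ℚ[X]) T.card).symm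

lemma half_two : (C (1/2 : ℚ) : ℚ[X]) * 2 = 1 := by
  rw [mul_two, ← C_add]
  norm_num

lemma q_eq (d : ℕ) (p : Prop) [Decidable p] :
    (∑ T : Finset (Fin d), if (Odd T.card ↔ p) then (X : ℚ[X]) ^ T.card else 0)
      = if p then fminus d else fplus d := by
  by_cases hp : p
  · simp only [hp, iff_true, if_true, fminus]
    rw [← sum_pow_card d, ← sum_neg_pow_card d, ← Finset.sum_sub_distrib, Finset.mul_sum]
    refine Finset.sum_congr rfl fun T _ => ?_
    by_cases hT : Odd T.card
    · rw [if_pos hT, hT.neg_one_pow]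
      have h2 : (X:ℚ[X])^T.card - (-1)*X^T.card = 2 * X^T.card := by ring
      rw [h2, ← mul_assoc, half_two, one_mul]
    · rw [if_neg hT, (Nat.not_odd_iff_even.mp hT).neg_one_pow]
      ring
  · simp only [hp, iff_false, if_false, fplus]
    rw [← sum_pow_card d, ← sum_neg_pow_card d, ← Finset.sum_add_distrib, Finset.mul_sum]
    refine Finset.sum_congr rfl fun T _ => ?_
    by_cases hT : Odd T.card
    · rw [if_neg (not_not_intro hT), hT.neg_one_pow]
      ring
    · rw [if_pos hT, (Nat.not_odd_iff_even.mp hT).neg_one_pow]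
      have h2 : (X:ℚ[X])^T.card + 1*X^T.card = 2 * X^T.card := by ring
      rw [h2, ← mul_assoc, half_two, one_mul]

lemma prod_if {n : ℕ} (A : Finset (Fin n)) (f g : ℚ[X]) :
    ∏ i : Fin n, (if i ∈ A then f else g) = f ^ A.card * g ^ (n - A.card) := by
  rw [Finset.prod_ite, Finset.prod_const, Finset.prod_const, Finset.filter_univ_mem]
  congr 1
  rw [Finset.filter_not, Finset.filter_univ_mem, ← Finset.compl_eq_univ_sdiff,
    Finset.card_compl]
  simp

lemma prod_eq_sum (n d : ℕ) (A : Finset (Fin n)) :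
    (∏ i : Fin n, (if i ∈ A then fminus d else fplus d))
      = ∑ x : Fin n → Finset (Fin d),
          if (∀ i, (Odd (x i).card ↔ i ∈ A)) then (X:ℚ[X]) ^ (∑ i, (x i).card) else 0 := by
  have h1 : ∀ i : Fin n, (if i ∈ A then fminus d else fplus d)
      = ∑ T ∈ (Finset.univ : Finset (Finset (Fin d))),
          if (Odd T.card ↔ i ∈ A) then (X:ℚ[X]) ^ T.card else 0 :=
    fun i => (q_eq d (i ∈ A)).symm
  rw [Finset.prod_congr rfl (fun i _ => h1 i), Finset.prod_univ_sum, Fintype.piFinset_univ]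
  refine Finset.sum_congr rfl fun x _ => ?_
  by_cases hall : ∀ i, (Odd ((x i).card) ↔ i ∈ A)
  · rw [if_pos hall, Finset.prod_congr rfl (fun i _ => if_pos (hall i)),
      Finset.prod_pow_eq_pow_sum]
  · rw [if_neg hall]
    obtain ⟨i0, hi0⟩ := not_forall.mp hall
    exact Finset.prod_eq_zero (Finset.mem_univ i0) (if_neg hi0)

lemma coeff_count (n d m : ℕ) (A : Finset (Fin n)) :
    (((Finset.univ : Finset (Fin n → Finset (Fin d))).filter (fun x =>
        (∀ i, (Odd (x i).card ↔ i ∈ A)) ∧ ∑ i, (x i).card = m)).card : ℚ)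
      = (∏ i : Fin n, (if i ∈ A then fminus d else fplus d)).coeff m := by
  rw [prod_eq_sum, Polynomial.finset_sum_coeff]
  have key : ∀ x : Fin n → Finset (Fin d),
      (if (∀ i, (Odd (x i).card ↔ i ∈ A)) then (X:ℚ[X]) ^ (∑ i, (x i).card) else 0).coeff m
        = if ((∀ i, (Odd (x i).card ↔ i ∈ A)) ∧ ∑ i, (x i).card = m) then 1 else 0 := by
    intro x
    by_cases h1 : ∀ i, (Odd (x i).card ↔ i ∈ A)
    · rw [if_pos h1, Polynomial.coeff_X_pow]
      by_cases h2 : ∑ i, (x i).card = m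
      · rw [if_pos (h2.symm), if_pos ⟨h1, h2⟩]
      · rw [if_neg (fun hc => h2 hc.symm), if_neg (fun hc => h2 hc.2)]
    · rw [if_neg h1, Polynomial.coeff_zero, if_neg (fun hc => h1 hc.1)]
  rw [Finset.sum_congr rfl fun x _ => key x, Finset.sum_boole]

lemma card_eq_sum_fibers {n d : ℕ} (S : Finset (Fin n × Fin d)) :
    S.card = ∑ i : Fin n, (Finset.univ.filter fun j : Fin d => (i, j) ∈ S).card := by
  rw [Finset.card_eq_sum_card_fiberwise (f := fun p : Fin n × Fin d => p.1)
    (fun p _ => Finset.mem_univ p.1)]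
  refine Finset.sum_congr rfl fun i _ => ?_
  refine Finset.card_bij (fun p _ => p.2) ?_ ?_ ?_
  · intro p hp
    simp only [Finset.mem_filter] at hp ⊢
    obtain ⟨hpS, hp1⟩ := hp
    refine ⟨Finset.mem_univ _, ?_⟩
    rwa [show (i, p.2) = p from by rw [← hp1]]
  · intro p hp q hq hpq
    simp only [Finset.mem_filter] at hp hq
    exact Prod.ext (hp.2.trans hq.2.symm) hpq
  · intro j hj
    simp only [Finset.mem_filter] at hj
    exact ⟨(i, j), Finset.mem_filter.mpr ⟨hj.2, rfl⟩, rfl⟩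

lemma card_S_eq_card_x (n d m h : ℕ) :
    ((Finset.univ.filter (fun S : Finset (Fin n × Fin d) =>
        S.card = m ∧
          (Finset.univ.filter (fun i : Fin n =>
            Odd (Finset.univ.filter (fun j : Fin d => (i, j) ∈ S)).card)).card = h)).card)
      = ((Finset.univ : Finset (Fin n → Finset (Fin d))).filter (fun x =>
          (∑ i, (x i).card = m) ∧
          (Finset.univ.filter (fun i : Fin n => Odd (x i).card)).card = h)).card := by
  refine Finset.card_bij' (fun S _ => fun i => Finset.univ.filter (fun j => (i, j) ∈ S))
    (fun x _ => Finset.univ.filter (fun p : Fin n × Fin d => p.2 ∈ x p.1)) ?_ ?_ ?_ ?_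
  · intro S hS
    simp only [Finset.mem_filter] at hS ⊢
    exact ⟨Finset.mem_univ _, by rw [← card_eq_sum_fibers]; exact hS.2.1, hS.2.2⟩
  · intro x hx
    simp only [Finset.mem_filter] at hx ⊢
    refine ⟨Finset.mem_univ _, ?_, ?_⟩
    · rw [card_eq_sum_fibers, ← hx.2.1]
      refine Finset.sum_congr rfl fun i _ => ?_
      congr 1
      ext j
      simp
    · rw [← hx.2.2]
      refine congrArg _ (Finset.filter_congr fun i _ => ?_)
      simp
  · intro S _
    ext p
    simp
  · intro x _
    funext i
    ext j
    simp

theorem stmt14 (n d m h : ℕ) :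
    ((Finset.univ.filter (fun S : Finset (Fin n × Fin d) =>
        S.card = m ∧
          (Finset.univ.filter (fun i : Fin n =>
            Odd (Finset.univ.filter (fun j : Fin d => (i, j) ∈ S)).card)).card = h)).card : ℚ)
      = (n.choose h : ℚ) * ((fminus d) ^ h * (fplus d) ^ (n - h)).coeff m := by
  rw [card_S_eq_card_x n d m h]
  rw [Finset.card_eq_sum_card_fiberwise
    (f := fun x : Fin n → Finset (Fin d) => Finset.univ.filter (fun i => Odd (x i).card))
    (t := Finset.powersetCard h Finset.univ)
    (fun x hx => Finset.mem_powersetCard_univ.mpr (Finset.mem_filter.mp hx).2.2)]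
  have hfib : ∀ A ∈ Finset.powersetCard h (Finset.univ : Finset (Fin n)),
      ((Finset.univ.filter (fun x : Fin n → Finset (Fin d) =>
          (∑ i, (x i).card = m) ∧
          (Finset.univ.filter (fun i : Fin n => Odd (x i).card)).card = h)).filter
        (fun x => Finset.univ.filter (fun i => Odd (x i).card) = A))
      = (Finset.univ : Finset (Fin n → Finset (Fin d))).filter (fun x =>
          (∀ i, (Odd (x i).card ↔ i ∈ A)) ∧ ∑ i, (x i).card = m) := by
    intro A hA
    have hAcard : A.card = h := Finset.mem_powersetCard_univ.mp hA
    rw [Finset.filter_filter]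
    refine Finset.filter_congr fun x _ => ?_
    constructor
    · rintro ⟨⟨hm, _⟩, hEq⟩
      refine ⟨fun i => ?_, hm⟩
      rw [← hEq]
      simp
    · rintro ⟨hiff, hm⟩
      have hEq : Finset.univ.filter (fun i => Odd (x i).card) = A := by
        ext i
        simp [hiff i]
      exact ⟨⟨hm, by rw [hEq, hAcard]⟩, hEq⟩
  push_cast
  rw [Finset.sum_congr rfl fun A hA => by rw [hfib A hA]]
  rw [Finset.sum_congr rfl fun A hA => coeff_count n d m A]
  rw [Finset.sum_congr rfl fun A hA => by
    rw [prod_if A (fminus d) (fplus d), Finset.mem_powersetCard_univ.mp hA]]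
  rw [Finset.sum_const, Finset.card_powersetCard, Finset.card_univ, Fintype.card_fin,
    nsmul_eq_mul]
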